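/- arXiv:1509.06629 — 4 statements merged into one kernel-verified Lean document; each statement's English description precedes it below -/
import Mathlib

section
/- Let (u_0, v_0) and (u_1, v_1) be nonzero vectors in C^2 representing distinct points of CP^1, and let L_i(u,v) = u_i v - v_i u. Then for the degree-k bilinear pairing, (L_0^k, L_1^k) = (u_0 v_1 - v_0 u_1)^k, which is nonzero. -/
open Polynomial Finset

/-- The bilinear pairing on binary forms of degree `k`, where a form
`q(u,v) = ∑ c_i u^(k-i) v^i` is encoded as the polynomial `∑ c_i X^i` (i.e. `u = 1`,
`X = v`):  `(q, q~) = ∑_{i=0}^k (-1)^i c_i d_{k-i} / binom(k,i)`. -/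
noncomputable def bform (k : ℕ) (q r : Polynomial ℂ) : ℂ :=
  ∑ i ∈ Finset.range (k + 1), (-1) ^ i * q.coeff i * r.coeff (k - i) / (k.choose i : ℂ)

lemma coeff_lin_pow (u v : ℂ) (k i : ℕ) (hi : i ≤ k) :
    ((C u * X - C v) ^ k).coeff i = (k.choose i : ℂ) * u ^ i * (-v) ^ (k - i) := by
  have h : (C u * X - C v : ℂ[X]) = C u * X + C (-v) := by rw [map_neg]; ring
  have hterm : ∀ j, (C u * X) ^ j * (C (-v) : ℂ[X]) ^ (k - j) * (k.choose j : ℂ[X])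
      = C ((k.choose j : ℂ) * u ^ j * (-v) ^ (k - j)) * X ^ j := by
    intro j
    rw [mul_pow, ← C_pow, ← C_pow, ← C_eq_natCast,
      show ∀ a b c x : ℂ[X], a * x * b * c = a * b * c * x from fun a b c x => by ring,
      ← C_mul, ← C_mul]
    congr 1
    ring
  rw [h, add_pow, finset_sum_coeff]
  rw [Finset.sum_eq_single i]
  · rw [hterm, coeff_C_mul, coeff_X_pow, if_pos rfl, mul_one]
  · intro j hj hne
    rw [hterm, coeff_C_mul, coeff_X_pow, if_neg hne.symm, mul_zero]
  · intro hni
    exact absurd (Finset.mem_range.2 (Nat.lt_succ_of_le hi)) hni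

lemma bform_eq (k : ℕ) (u₀ v₀ u₁ v₁ : ℂ) :
    bform k ((C u₀ * X - C v₀) ^ k) ((C u₁ * X - C v₁) ^ k)
      = (u₀ * v₁ - v₀ * u₁) ^ k := by
  unfold bform
  rw [show u₀ * v₁ - v₀ * u₁ = u₀ * v₁ + -(v₀ * u₁) by ring, add_pow]
  refine Finset.sum_congr rfl fun i hi => ?_
  have hik : i ≤ k := Nat.lt_succ_iff.1 (Finset.mem_range.1 hi)
  rw [coeff_lin_pow u₀ v₀ k i hik, coeff_lin_pow u₁ v₁ k (k - i) (Nat.sub_le k i),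
    Nat.sub_sub_self hik, Nat.choose_symm hik]
  have hc : (k.choose i : ℂ) ≠ 0 := Nat.cast_ne_zero.2 (Nat.choose_pos hik).ne'
  rw [neg_pow v₀, neg_pow v₁, neg_pow (v₀ * u₁)]
  field_simp
  ring_nf
  have h2 : ((-1 : ℂ)) ^ (i * 2) = 1 := by
    rw [mul_comm i 2, pow_mul]; norm_num
  rw [h2, mul_one]

/-- if `(u₀,v₀)` and `(u₁,v₁)` are nonzero vectors of `ℂ²` representing
distinct points of `ℂP¹` (i.e. non-proportional), and `Lᵢ = uᵢ v - vᵢ u` (encoded as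
`uᵢ X - vᵢ`), then `(L₀^k, L₁^k) = (u₀ v₁ - v₀ u₁)^k ≠ 0`. -/
theorem bform_pow_det (k : ℕ) (u₀ v₀ u₁ v₁ : ℂ)
    (h₀ : ((u₀, v₀) : ℂ × ℂ) ≠ 0) (h₁ : ((u₁, v₁) : ℂ × ℂ) ≠ 0)
    (hdist : ¬ ∃ c : ℂ, ((u₁, v₁) : ℂ × ℂ) = c • (u₀, v₀)) :
    bform k ((Polynomial.C u₀ * Polynomial.X - Polynomial.C v₀) ^ k)
        ((Polynomial.C u₁ * Polynomial.X - Polynomial.C v₁) ^ k)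
      = (u₀ * v₁ - v₀ * u₁) ^ k ∧ (u₀ * v₁ - v₀ * u₁) ^ k ≠ 0 := by
  have hd : u₀ * v₁ - v₀ * u₁ ≠ 0 := by
    intro hzero
    have hz : u₀ * v₁ = v₀ * u₁ := by linear_combination hzero
    rcases eq_or_ne u₀ 0 with hu | hu
    · have hv : v₀ ≠ 0 := by
        intro hv; exact h₀ (by simp [Prod.ext_iff, hu, hv])
      have hu₁ : u₁ = 0 := by
        have h2 : v₀ * u₁ = 0 := by rw [← hz, hu]; ring
        exact (mul_eq_zero.1 h2).resolve_left hv
      exact hdist ⟨v₁ / v₀, by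
        simp only [Prod.smul_mk, smul_eq_mul, Prod.mk.injEq]
        refine ⟨by simp [hu, hu₁], by field_simp⟩⟩
    · exact hdist ⟨u₁ / u₀, by
        simp only [Prod.smul_mk, smul_eq_mul, Prod.mk.injEq]
        refine ⟨by field_simp, ?_⟩
        rw [div_mul_eq_mul_div, eq_div_iff hu]
        linear_combination hz⟩
  exact ⟨bform_eq k u₀ v₀ u₁ v₁, pow_ne_zero k hd⟩
end

section
/- Let z_1,...,z_n be distinct points of CP^1 with Hopf lifts (u_i, v_i) in C^2 \ {0}, and let L_i(u,v) = u_i v - v_i u. Fix 1 <= d <= n-1 and k = n-d. For each d-subset I of {1,...,n} with complement J, set q_I = prod_{j in J} L_j (a binary form of degree k), and p_I = Lambda_{q_I}^{\odot d}, the d-fold symmetric tensor power of the linear functional Lambda_{q_I} = (q_I, -) on P_{1,k}. Then the binom(n,d) elements p_I, as I ranges over d-subsets of {1,...,n}, are linearly independent over C. -/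
open Polynomial Finset

section Aux

lemma bform_sum {β : Type*} (k : ℕ) (q : Polynomial ℂ) (S : Finset β) (x : β → Polynomial ℂ) :
    bform k q (∑ t ∈ S, x t) = ∑ t ∈ S, bform k q (x t) := by
  unfold bform
  rw [Finset.sum_comm]
  refine Finset.sum_congr rfl fun i _ => ?_
  rw [Polynomial.finset_sum_coeff, Finset.mul_sum, Finset.sum_div]

lemma coeff_linpow (k i : ℕ) (hi : i ≤ k) (a b : ℂ) :
    ((C b * X - C a) ^ k).coeff (k - i) = (k.choose i : ℂ) * b ^ (k - i) * (-a) ^ i := by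
  have h : C b * X - C a = C b * X + C (-a) := by rw [map_neg, sub_eq_add_neg]
  have hterm : ∀ m : ℕ, (C b * X) ^ m * C (-a) ^ (k - m) * (k.choose m : Polynomial ℂ) =
      C (b ^ m * (-a) ^ (k - m) * (k.choose m : ℂ)) * X ^ m := by
    intro m
    rw [mul_pow, ← C_pow, ← C_pow, ← Polynomial.C_eq_natCast]
    rw [C_mul, C_mul]
    ring
  rw [h, add_pow]
  simp only [hterm, Polynomial.finset_sum_coeff, Polynomial.coeff_C_mul, Polynomial.coeff_X_pow]
  rw [Finset.sum_eq_single (k - i)]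
  · rw [if_pos rfl, Nat.sub_sub_self hi, Nat.choose_symm hi]
    ring
  · intro m _ hne
    rw [if_neg (fun hh => hne hh.symm), mul_zero]
  · intro hmem
    exact absurd (Finset.mem_range.mpr (Nat.lt_succ_of_le (Nat.sub_le k i))) hmem

lemma bform_linpow (k : ℕ) (q : Polynomial ℂ) (a b : ℂ) :
    bform k q ((C b * X - C a) ^ k)
      = ∑ i ∈ Finset.range (k + 1), q.coeff i * a ^ i * b ^ (k - i) := by
  unfold bform
  refine Finset.sum_congr rfl fun i hi => ?_
  have hik : i ≤ k := Nat.lt_succ_iff.mp (Finset.mem_range.mp hi)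
  rw [coeff_linpow k i hik a b]
  have hch : (k.choose i : ℂ) ≠ 0 := Nat.cast_ne_zero.mpr (Nat.choose_pos hik).ne'
  field_simp
  rw [show (-a) ^ i = (-1 : ℂ) ^ i * a ^ i by rw [neg_pow]]
  ring_nf
  rw [show i * 2 = 2 * i by ring, pow_mul]
  norm_num

lemma sum_coeff_prod {n : ℕ} (u v : Fin n → ℂ) (J : Finset (Fin n)) (a b : ℂ) :
    ∑ i ∈ Finset.range (J.card + 1),
        (∏ j ∈ J, (C (u j) * X - C (v j))).coeff i * a ^ i * b ^ (J.card - i)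
      = ∏ j ∈ J, (u j * a - v j * b) := by
  set q : Polynomial ℂ := ∏ j ∈ J, (C (u j) * X - C (v j)) with hq
  have hdeg : q.natDegree ≤ J.card := by
    refine le_trans (Polynomial.natDegree_prod_le _ _) ?_
    calc ∑ j ∈ J, (C (u j) * X - C (v j)).natDegree ≤ ∑ j ∈ J, 1 := by
          refine Finset.sum_le_sum fun j _ => ?_
          rw [sub_eq_add_neg, ← map_neg]
          exact Polynomial.natDegree_linear_le
      _ = J.card := by simp
  by_cases hb : b = 0
  · subst hb
    rw [Finset.sum_eq_single J.card]
    · have h1 : ∀ j ∈ J, (C (u j) * X - C (v j)).natDegree ≤ 1 := by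
        intro j _
        rw [sub_eq_add_neg, ← map_neg]
        exact Polynomial.natDegree_linear_le
      have h2 := Polynomial.coeff_prod_of_natDegree_le J (fun j => C (u j) * X - C (v j)) 1 h1
      rw [mul_one] at h2
      rw [hq, h2]
      simp only [Nat.sub_self, pow_zero, mul_one]
      rw [show (a:ℂ) ^ J.card = ∏ _j ∈ J, a by rw [Finset.prod_const], ← Finset.prod_mul_distrib]
      refine Finset.prod_congr rfl fun j _ => ?_
      simp only [Polynomial.coeff_sub, Polynomial.coeff_C_mul, Polynomial.coeff_X_one,
        Polynomial.coeff_C, if_neg one_ne_zero, mul_one, sub_zero, mul_zero]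
    · intro i hi hne
      have := Finset.mem_range.mp hi
      rw [zero_pow (by omega), mul_zero]
    · intro h; exact absurd (Finset.mem_range.mpr (by omega)) h
  · have heval : ∀ i ∈ Finset.range (J.card + 1),
        q.coeff i * a ^ i * b ^ (J.card - i) = b ^ J.card * (q.coeff i * (a / b) ^ i) := by
      intro i hi
      have hik : i ≤ J.card := Nat.lt_succ_iff.mp (Finset.mem_range.mp hi)
      rw [div_pow]
      field_simp
      rw [mul_assoc, ← pow_add, show J.card - i + i = J.card from by omega]
    rw [Finset.sum_congr rfl heval, ← Finset.mul_sum,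
      ← Polynomial.eval_eq_sum_range' (Nat.lt_succ_of_le hdeg)]
    rw [hq, Polynomial.eval_prod]
    rw [show b ^ J.card = ∏ _j ∈ J, b by rw [Finset.prod_const]]
    rw [← Finset.prod_mul_distrib]
    refine Finset.prod_congr rfl fun j _ => ?_
    simp only [Polynomial.eval_sub, Polynomial.eval_mul, Polynomial.eval_C, Polynomial.eval_X]
    field_simp

lemma bform_prod_linpow {n : ℕ} (u v : Fin n → ℂ) (J : Finset (Fin n)) (t : Fin n) :
    bform J.card (∏ j ∈ J, (C (u j) * X - C (v j))) ((C (u t) * X - C (v t)) ^ J.card)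
      = ∏ j ∈ J, (u j * v t - v j * u t) := by
  rw [bform_linpow]
  exact sum_coeff_prod u v J (v t) (u t)

lemma superset_sum {ι : Type*} [DecidableEq ι] (T R : Finset ι) (hR : R ⊆ T) :
    ∑ S ∈ T.powerset.filter (fun S => R ⊆ S), (-1 : ℂ) ^ S.card
      = if R = T then (-1 : ℂ) ^ T.card else 0 := by
  have hbij : ∑ S ∈ T.powerset.filter (fun S => R ⊆ S), (-1 : ℂ) ^ S.card
      = ∑ S' ∈ (T \ R).powerset, (-1 : ℂ) ^ (S' ∪ R).card := by
    refine Finset.sum_nbij' (fun S => S \ R) (fun S' => S' ∪ R) ?_ ?_ ?_ ?_ ?_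
    · intro S hS
      rw [Finset.mem_filter, Finset.mem_powerset] at hS
      exact Finset.mem_powerset.mpr (Finset.sdiff_subset_sdiff hS.1 (le_refl R))
    · intro S' hS'
      rw [Finset.mem_powerset] at hS'
      rw [Finset.mem_filter, Finset.mem_powerset]
      exact ⟨Finset.union_subset (hS'.trans (Finset.sdiff_subset)) hR, Finset.subset_union_right⟩
    · intro S hS
      rw [Finset.mem_filter] at hS
      exact Finset.sdiff_union_of_subset hS.2
    · intro S' hS'
      rw [Finset.mem_powerset] at hS'
      show (S' ∪ R) \ R = S'
      rw [Finset.union_sdiff_right]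
      exact Finset.sdiff_eq_self_of_disjoint
        (Finset.disjoint_of_subset_left hS' Finset.sdiff_disjoint)
    · intro S hS
      rw [Finset.mem_filter] at hS
      rw [Finset.sdiff_union_of_subset hS.2]
  rw [hbij]
  have hcard : ∀ S' ∈ (T \ R).powerset, (S' ∪ R).card = S'.card + R.card := by
    intro S' hS'
    rw [Finset.mem_powerset] at hS'
    exact Finset.card_union_of_disjoint
      (Finset.disjoint_of_subset_left hS' Finset.sdiff_disjoint)
  calc ∑ S' ∈ (T \ R).powerset, (-1 : ℂ) ^ (S' ∪ R).card
      = ∑ S' ∈ (T \ R).powerset, (-1 : ℂ) ^ S'.card * (-1 : ℂ) ^ R.card := by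
        refine Finset.sum_congr rfl fun S' hS' => ?_
        rw [hcard S' hS', pow_add]
    _ = (∑ S' ∈ (T \ R).powerset, (-1 : ℂ) ^ S'.card) * (-1 : ℂ) ^ R.card := by
        rw [Finset.sum_mul]
    _ = _ := by
        have := Finset.sum_powerset_neg_one_pow_card (x := T \ R)
        have h2 : (∑ S' ∈ (T \ R).powerset, (-1 : ℂ) ^ S'.card)
            = if T \ R = ∅ then 1 else 0 := by
          exact_mod_cast congrArg (fun z : ℤ => (z : ℂ)) this
        rw [h2]
        by_cases h : R = T
        · subst h
          simp
        · rw [if_neg h, if_neg (fun he => h (Finset.Subset.antisymm hR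
            (Finset.sdiff_eq_empty_iff_subset.mp he))), zero_mul]

noncomputable def polarCount {ι : Type*} [DecidableEq ι] (T : Finset ι) : ℕ :=
  ((Fintype.piFinset fun _ : Fin T.card => T).filter fun p => Finset.image p Finset.univ = T).card

lemma polarCount_pos {ι : Type*} [DecidableEq ι] (T : Finset ι) : 0 < polarCount T := by
  rw [polarCount, Finset.card_pos]
  refine ⟨fun i => (T.equivFin.symm i : ι), ?_⟩
  rw [Finset.mem_filter]
  constructor
  · rw [Fintype.mem_piFinset]
    intro i; exact (T.equivFin.symm i).2
  · apply Finset.Subset.antisymm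
    · intro t ht
      rw [Finset.mem_image] at ht
      obtain ⟨i, _, rfl⟩ := ht
      exact (T.equivFin.symm i).2
    · intro t ht
      rw [Finset.mem_image]
      exact ⟨T.equivFin ⟨t, ht⟩, Finset.mem_univ _, by simp⟩

lemma polar {ι : Type*} [DecidableEq ι] (T : Finset ι) (w : ι → ℂ) :
    ∑ S ∈ T.powerset, (-1 : ℂ) ^ S.card * (∑ t ∈ S, w t) ^ T.card
      = (-1 : ℂ) ^ T.card * (polarCount T) * ∏ t ∈ T, w t := by
  have hpow : ∀ S ∈ T.powerset, (∑ t ∈ S, w t) ^ T.card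
      = ∑ p ∈ Fintype.piFinset (fun _ : Fin T.card => S), ∏ i, w (p i) := by
    intro S _
    rw [← Fin.prod_const T.card (∑ t ∈ S, w t)]
    exact Finset.prod_univ_sum _ _
  have hfil : ∀ S ∈ T.powerset, (Fintype.piFinset fun _ : Fin T.card => S)
      = (Fintype.piFinset fun _ : Fin T.card => T).filter (fun p => ∀ i, p i ∈ S) := by
    intro S hS
    rw [Finset.mem_powerset] at hS
    ext p
    simp only [Fintype.mem_piFinset, Finset.mem_filter]
    exact ⟨fun h => ⟨fun i => hS (h i), h⟩, fun h => h.2⟩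
  calc ∑ S ∈ T.powerset, (-1 : ℂ) ^ S.card * (∑ t ∈ S, w t) ^ T.card
      = ∑ S ∈ T.powerset, ∑ p ∈ Fintype.piFinset (fun _ : Fin T.card => T),
          (if ∀ i, p i ∈ S then (-1 : ℂ) ^ S.card * ∏ i, w (p i) else 0) := by
        refine Finset.sum_congr rfl fun S hS => ?_
        rw [hpow S hS, hfil S hS, Finset.sum_filter, Finset.mul_sum]
        refine Finset.sum_congr rfl fun p _ => ?_
        by_cases h : ∀ i, p i ∈ S <;> simp [h]
    _ = ∑ p ∈ Fintype.piFinset (fun _ : Fin T.card => T),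
          (∑ S ∈ T.powerset.filter (fun S => Finset.image p Finset.univ ⊆ S),
            (-1 : ℂ) ^ S.card) * ∏ i, w (p i) := by
        rw [Finset.sum_comm]
        refine Finset.sum_congr rfl fun p _ => ?_
        rw [Finset.sum_filter, Finset.sum_mul]
        refine Finset.sum_congr rfl fun S _ => ?_
        have hiff : (Finset.image p Finset.univ ⊆ S) ↔ (∀ i, p i ∈ S) := by
          simp [Finset.image_subset_iff]
        by_cases h : ∀ i, p i ∈ S
        · rw [if_pos h, if_pos (hiff.mpr h)]
        · rw [if_neg h, if_neg (fun hh => h (hiff.mp hh)), zero_mul]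
    _ = ∑ p ∈ Fintype.piFinset (fun _ : Fin T.card => T),
          (if Finset.image p Finset.univ = T then (-1 : ℂ) ^ T.card else 0) * ∏ i, w (p i) := by
        refine Finset.sum_congr rfl fun p hp => ?_
        rw [superset_sum T (Finset.image p Finset.univ) ?_]
        · rw [Fintype.mem_piFinset] at hp
          intro t ht
          rw [Finset.mem_image] at ht
          obtain ⟨i, _, rfl⟩ := ht
          exact hp i
    _ = ∑ p ∈ (Fintype.piFinset fun _ : Fin T.card => T).filter
          (fun p => Finset.image p Finset.univ = T), (-1 : ℂ) ^ T.card * ∏ i, w (p i) := by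
        rw [Finset.sum_filter]
        refine Finset.sum_congr rfl fun p _ => ?_
        by_cases h : Finset.image p Finset.univ = T <;> simp [h]
    _ = (-1 : ℂ) ^ T.card * (polarCount T) * ∏ t ∈ T, w t := by
        have hprd : ∀ p ∈ (Fintype.piFinset fun _ : Fin T.card => T).filter
            (fun p => Finset.image p Finset.univ = T), ∏ i, w (p i) = ∏ t ∈ T, w t := by
          intro p hp
          rw [Finset.mem_filter] at hp
          have hcard : (Finset.image p Finset.univ).card
              = (Finset.univ : Finset (Fin T.card)).card := by
            rw [hp.2, Finset.card_univ, Fintype.card_fin]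
          have hinj := Finset.card_image_iff.mp hcard
          have hh : ∏ t ∈ Finset.image p Finset.univ, w t = ∏ i, w (p i) :=
            Finset.prod_image fun x hx y hy h =>
              hinj (Finset.mem_coe.mpr hx) (Finset.mem_coe.mpr hy) h
          rw [hp.2] at hh
          exact hh.symm
        rw [Finset.sum_congr rfl (fun p hp => by rw [hprd p hp])]
        rw [Finset.sum_const, polarCount]
        simp [mul_assoc, mul_comm]

end Aux

/-- observer-based construction, `ℂP¹` case: for distinct points of `ℂP¹`
with nonzero lifts `(uᵢ, vᵢ)` and `Lᵢ = uᵢ v - vᵢ u` (encoded as `uᵢ X - vᵢ`), with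
`1 ≤ d ≤ n-1`, `k = n - d`, `q_I = ∏_{j ∈ Iᶜ} L_j` and
`p_I = Λ_{q_I}^{⊙ d} ∈ Sym^d(P_{1,k}^*)` — realized here, via the canonical embedding of
`Sym^d` of the dual into functions, as the degree-`d` polynomial function
`x ↦ ((q_I, x))^d` — the `binom(n,d)` elements `p_I` are linearly independent over `ℂ`. -/
theorem observer_maps_linearIndependent (n d : ℕ) (hd : 1 ≤ d) (hdn : d ≤ n - 1)
    (u v : Fin n → ℂ) (hnz : ∀ i, ((u i, v i) : ℂ × ℂ) ≠ 0)
    (hdist : ∀ i j, i ≠ j → ¬ ∃ c : ℂ, ((u j, v j) : ℂ × ℂ) = c • (u i, v i)) :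
    LinearIndependent ℂ
      (fun I : Finset.powersetCard d (Finset.univ : Finset (Fin n)) =>
        (fun x : Polynomial ℂ =>
          (bform (n - d)
            (∏ j ∈ ((I : Finset (Fin n)))ᶜ,
              (Polynomial.C (u j) * Polynomial.X - Polynomial.C (v j))) x) ^ d)) := by
  classical
  have det_ne : ∀ j t : Fin n, j ≠ t → u j * v t - v j * u t ≠ 0 := by
    intro j t hjt h
    apply hdist j t hjt
    have h' : u j * v t = v j * u t := sub_eq_zero.mp h
    have huv : u j ≠ 0 ∨ v j ≠ 0 := by
      by_contra hc
      push_neg at hc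
      exact hnz j (by rw [hc.1, hc.2]; rfl)
    rcases huv with hu | hv
    · refine ⟨u t / u j, ?_⟩
      rw [Prod.smul_mk, smul_eq_mul, smul_eq_mul, Prod.mk.injEq]
      constructor
      · field_simp
      · field_simp
        linear_combination h'
    · refine ⟨v t / v j, ?_⟩
      rw [Prod.smul_mk, smul_eq_mul, smul_eq_mul, Prod.mk.injEq]
      constructor
      · field_simp
        linear_combination -h'
      · field_simp
  rw [Fintype.linearIndependent_iff]
  intro g hg I₀
  have hI₀card : (I₀ : Finset (Fin n)).card = d := (Finset.mem_powersetCard.mp I₀.2).2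
  have hcompl : ∀ I : Finset.powersetCard d (Finset.univ : Finset (Fin n)),
      ((I : Finset (Fin n))ᶜ).card = n - d := by
    intro I
    rw [Finset.card_compl, (Finset.mem_powersetCard.mp I.2).2, Fintype.card_fin]
  have hgx : ∀ x : Polynomial ℂ, ∑ I : Finset.powersetCard d (Finset.univ : Finset (Fin n)),
      g I * (bform (n - d)
        (∏ j ∈ ((I : Finset (Fin n)))ᶜ, (C (u j) * X - C (v j))) x) ^ d = 0 := by
    intro x
    have h1 := congrFun hg x
    simpa using h1
  have hw : ∀ (I : Finset.powersetCard d (Finset.univ : Finset (Fin n))) (t : Fin n),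
      bform (n - d) (∏ j ∈ ((I : Finset (Fin n)))ᶜ, (C (u j) * X - C (v j)))
        ((C (u t) * X - C (v t)) ^ (n - d))
      = ∏ j ∈ ((I : Finset (Fin n)))ᶜ, (u j * v t - v j * u t) := by
    intro I t
    have h := bform_prod_linpow u v (((I : Finset (Fin n)))ᶜ) t
    rw [hcompl I] at h
    exact h
  have hS : ∀ S : Finset (Fin n),
      ∑ I : Finset.powersetCard d (Finset.univ : Finset (Fin n)),
        g I * (∑ t ∈ S, ∏ j ∈ ((I : Finset (Fin n)))ᶜ, (u j * v t - v j * u t)) ^ d = 0 := by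
    intro S
    have h1 := hgx (∑ t ∈ S, (C (u t) * X - C (v t)) ^ (n - d))
    refine Eq.trans ?_ h1
    refine Finset.sum_congr rfl fun I _ => ?_
    congr 2
    rw [bform_sum]
    exact (Finset.sum_congr rfl fun t _ => hw I t).symm
  have h0 : ∑ I : Finset.powersetCard d (Finset.univ : Finset (Fin n)),
      g I * ((-1 : ℂ) ^ d * (polarCount (I₀ : Finset (Fin n)) : ℂ) *
        ∏ t ∈ (I₀ : Finset (Fin n)),
          ∏ j ∈ ((I : Finset (Fin n)))ᶜ, (u j * v t - v j * u t)) = 0 := by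
    have h1 : ∑ S ∈ (I₀ : Finset (Fin n)).powerset, (-1 : ℂ) ^ S.card *
        (∑ I : Finset.powersetCard d (Finset.univ : Finset (Fin n)),
          g I * (∑ t ∈ S, ∏ j ∈ ((I : Finset (Fin n)))ᶜ, (u j * v t - v j * u t)) ^ d) = 0 := by
      refine Finset.sum_eq_zero fun S _ => ?_
      rw [hS S, mul_zero]
    have h2 : ∀ I : Finset.powersetCard d (Finset.univ : Finset (Fin n)),
        ∑ S ∈ (I₀ : Finset (Fin n)).powerset, (-1 : ℂ) ^ S.card *
            (∑ t ∈ S, ∏ j ∈ ((I : Finset (Fin n)))ᶜ, (u j * v t - v j * u t)) ^ d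
          = (-1 : ℂ) ^ d * (polarCount (I₀ : Finset (Fin n)) : ℂ) *
            ∏ t ∈ (I₀ : Finset (Fin n)),
              ∏ j ∈ ((I : Finset (Fin n)))ᶜ, (u j * v t - v j * u t) := by
      intro I
      have hp := polar (I₀ : Finset (Fin n))
        (fun t => ∏ j ∈ ((I : Finset (Fin n)))ᶜ, (u j * v t - v j * u t))
      rw [hI₀card] at hp
      exact hp
    calc ∑ I : Finset.powersetCard d (Finset.univ : Finset (Fin n)),
        g I * ((-1 : ℂ) ^ d * (polarCount (I₀ : Finset (Fin n)) : ℂ) *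
          ∏ t ∈ (I₀ : Finset (Fin n)),
            ∏ j ∈ ((I : Finset (Fin n)))ᶜ, (u j * v t - v j * u t))
        = ∑ I : Finset.powersetCard d (Finset.univ : Finset (Fin n)),
            g I * ∑ S ∈ (I₀ : Finset (Fin n)).powerset, (-1 : ℂ) ^ S.card *
              (∑ t ∈ S, ∏ j ∈ ((I : Finset (Fin n)))ᶜ, (u j * v t - v j * u t)) ^ d := by
          refine Finset.sum_congr rfl fun I _ => ?_
          rw [h2 I]
      _ = ∑ S ∈ (I₀ : Finset (Fin n)).powerset,
            ∑ I : Finset.powersetCard d (Finset.univ : Finset (Fin n)),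
              g I * ((-1 : ℂ) ^ S.card *
                (∑ t ∈ S, ∏ j ∈ ((I : Finset (Fin n)))ᶜ, (u j * v t - v j * u t)) ^ d) := by
          rw [Finset.sum_comm]
          refine Finset.sum_congr rfl fun I _ => ?_
          rw [Finset.mul_sum]
      _ = ∑ S ∈ (I₀ : Finset (Fin n)).powerset, (-1 : ℂ) ^ S.card *
            (∑ I : Finset.powersetCard d (Finset.univ : Finset (Fin n)),
              g I * (∑ t ∈ S, ∏ j ∈ ((I : Finset (Fin n)))ᶜ, (u j * v t - v j * u t)) ^ d) := by
          refine Finset.sum_congr rfl fun S _ => ?_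
          rw [Finset.mul_sum]
          refine Finset.sum_congr rfl fun I _ => ?_
          ring
      _ = 0 := h1
  rw [Finset.sum_eq_single I₀ ?_ ?_] at h0
  · have hN : ((polarCount (I₀ : Finset (Fin n)) : ℕ) : ℂ) ≠ 0 :=
      Nat.cast_ne_zero.mpr (polarCount_pos _).ne'
    have hprod : ∏ t ∈ (I₀ : Finset (Fin n)),
        ∏ j ∈ ((I₀ : Finset (Fin n)))ᶜ, (u j * v t - v j * u t) ≠ 0 := by
      refine Finset.prod_ne_zero_iff.mpr fun t ht => Finset.prod_ne_zero_iff.mpr fun j hj => ?_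
      exact det_ne j t (fun he => (Finset.mem_compl.mp hj) (he ▸ ht))
    have hfac : (-1 : ℂ) ^ d * (polarCount (I₀ : Finset (Fin n)) : ℂ) *
        ∏ t ∈ (I₀ : Finset (Fin n)),
          ∏ j ∈ ((I₀ : Finset (Fin n)))ᶜ, (u j * v t - v j * u t) ≠ 0 :=
      mul_ne_zero (mul_ne_zero (pow_ne_zero d (neg_ne_zero.mpr one_ne_zero)) hN) hprod
    exact (mul_eq_zero.mp h0).resolve_right hfac
  · intro I _ hne
    have hsub : ¬ ((I₀ : Finset (Fin n)) ⊆ (I : Finset (Fin n))) := by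
      intro hsub
      have hcard : (I : Finset (Fin n)).card ≤ (I₀ : Finset (Fin n)).card := by
        rw [hI₀card, (Finset.mem_powersetCard.mp I.2).2]
      have := Finset.eq_of_subset_of_card_le hsub hcard
      exact hne (Subtype.ext this.symm)
    obtain ⟨t, ht₀, htI⟩ := Finset.not_subset.mp hsub
    have hwz : ∏ j ∈ ((I : Finset (Fin n)))ᶜ, (u j * v t - v j * u t) = 0 :=
      Finset.prod_eq_zero (Finset.mem_compl.mpr htI) (by ring)
    have hpz : ∏ t' ∈ (I₀ : Finset (Fin n)),
        ∏ j ∈ ((I : Finset (Fin n)))ᶜ, (u j * v t' - v j * u t') = 0 :=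
      Finset.prod_eq_zero ht₀ hwz
    rw [hpz, mul_zero, mul_zero]
  · intro h
    exact absurd (Finset.mem_univ I₀) h
end

section
/- With notation as in the star-based CP^1 construction, setting h_I = prod_{i in I} L_i in P_{1,k} and g_I = h_I^{\odot d} in Sym^d(P_{1,k}), one has p_I(g_{I'}) nonzero if I = I' and p_I(g_{I'}) = 0 if I differs from I', for all k-subsets I, I' of {1,...,n}. -/
open Polynomial Finset

set_option maxRecDepth 8000

theorem star_lin_deg (a b : ℂ) : (C a * X - C b).natDegree ≤ 1 := by
  rw [sub_eq_add_neg, ← C_neg]; exact natDegree_linear_le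

theorem star_coeff_lin_pow (a b : ℂ) (k i : ℕ) (hi : i ≤ k) :
    ((C a * X - C b) ^ k).coeff i = (k.choose i : ℂ) * a ^ i * (-b) ^ (k - i) := by
  have h : (C a * X - C b) ^ k = (C a * X + C (-b)) ^ k := by ring_nf; rw [map_neg]; ring
  rw [h, add_pow, finset_sum_coeff]
  rw [Finset.sum_eq_single i]
  · simp only [mul_pow, ← C_neg, ← C_pow, mul_assoc, ← C_mul, mul_comm (X ^ i), coeff_C_mul,
      ← C_eq_natCast, coeff_X_pow, if_pos rfl]
    simp; ring
  · intro j hj hne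
    simp only [mul_pow, ← C_neg, ← C_pow, mul_assoc, ← C_mul, mul_comm (X ^ j), coeff_C_mul,
      ← C_eq_natCast, coeff_X_pow, if_neg hne.symm, mul_zero]
  · intro h; exact absurd (Finset.mem_range.2 (Nat.lt_succ_of_le hi)) h

theorem star_homog_eval {n : ℕ} (u v : Fin n → ℂ) (s : Finset (Fin n)) (a b : ℂ) :
    ∑ m ∈ Finset.range (s.card + 1),
        (∏ i ∈ s, (C (u i) * X - C (v i))).coeff m * b ^ m * a ^ (s.card - m)
      = ∏ i ∈ s, (u i * b - v i * a) := by
  set r := ∏ i ∈ s, (C (u i) * X - C (v i)) with hr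
  have hdeg : r.natDegree ≤ s.card := by
    refine (natDegree_prod_le _ _).trans ?_
    have h1 : ∑ i ∈ s, (C (u i) * X - C (v i)).natDegree ≤ ∑ _i ∈ s, 1 :=
      Finset.sum_le_sum fun i _ => star_lin_deg (u i) (v i)
    simpa using h1
  rcases eq_or_ne a 0 with rfl | ha
  · rw [Finset.sum_eq_single s.card]
    · have hck : r.coeff s.card = ∏ i ∈ s, (u i) := by
        have := Polynomial.coeff_prod_of_natDegree_le (s := s)
          (f := fun i => (C (u i) * X - C (v i))) (n := 1) (fun i _ => star_lin_deg _ _)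
        simp only [mul_one] at this
        rw [hr, this]
        congr 1; ext i
        simp [coeff_sub, coeff_C_mul]
      rw [hck]
      simp [Finset.prod_mul_distrib]
    · intro m hm hne
      have : s.card - m ≠ 0 := Nat.sub_ne_zero_of_lt (lt_of_le_of_ne
        (Nat.lt_succ_iff.1 (Finset.mem_range.1 hm)) hne)
      simp [zero_pow this]
    · intro h; exact absurd (Finset.mem_range.2 (Nat.lt_succ_self _)) h
  · have heval : r.eval (b / a) = ∏ i ∈ s, (u i * (b / a) - v i) := by
      rw [hr]; simp [eval_prod]
    have hsum : ∑ m ∈ Finset.range (s.card + 1), r.coeff m * b ^ m * a ^ (s.card - m)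
        = a ^ s.card * r.eval (b / a) := by
      rw [Polynomial.eval_eq_sum_range' (Nat.lt_succ_of_le hdeg), Finset.mul_sum]
      refine Finset.sum_congr rfl fun m hm => ?_
      have hmle : m ≤ s.card := Nat.lt_succ_iff.1 (Finset.mem_range.1 hm)
      rw [div_pow, pow_sub₀ a ha hmle]
      ring
    rw [hsum, heval]
    rw [show a ^ s.card = ∏ _i ∈ s, a by simp, ← Finset.prod_mul_distrib]
    refine Finset.prod_congr rfl fun i _ => ?_
    field_simp

theorem star_cross_ne {n : ℕ} (u v : Fin n → ℂ) (hnz : ∀ i, ((u i, v i) : ℂ × ℂ) ≠ 0)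
    (hdist : ∀ i j, i ≠ j → ¬ ∃ c : ℂ, ((u j, v j) : ℂ × ℂ) = c • (u i, v i))
    (i j : Fin n) (hij : i ≠ j) : u i * v j - v i * u j ≠ 0 := by
  intro h
  have h' : u i * v j = v i * u j := sub_eq_zero.1 h
  refine hdist i j hij ?_
  rcases eq_or_ne (u i) 0 with hui | hui
  · have hvi : v i ≠ 0 := by
      intro hvi; exact hnz i (by simp [hui, hvi, Prod.ext_iff])
    have huj : u j = 0 := by
      have : v i * u j = 0 := by rw [← h']; rw [hui]; ring
      exact (mul_eq_zero.1 this).resolve_left hvi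
    exact ⟨v j / v i, by simp [Prod.ext_iff, hui, huj, div_mul_cancel₀ _ hvi]⟩
  · refine ⟨u j / u i, ?_⟩
    have hvj : v j = u j / u i * v i := by
      field_simp
      linear_combination h'
    simp [Prod.ext_iff, div_mul_cancel₀ _ hui, hvj]

theorem star_bform_lin_pow (k : ℕ) (a b : ℂ) (r : Polynomial ℂ) :
    (∑ i ∈ Finset.range (k + 1),
        (-1) ^ i * ((C a * X - C b) ^ k).coeff i * r.coeff (k - i) / (k.choose i : ℂ))
      = (-1) ^ k * ∑ m ∈ Finset.range (k + 1), r.coeff m * b ^ m * a ^ (k - m) := by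
  rw [← Finset.sum_range_reflect (fun m => r.coeff m * b ^ m * a ^ (k - m)) (k + 1),
    Finset.mul_sum]
  refine Finset.sum_congr rfl fun i hi => ?_
  have hik : i ≤ k := Nat.lt_succ_iff.1 (Finset.mem_range.1 hi)
  have e1 : k + 1 - 1 - i = k - i := by omega
  have e2 : k - (k - i) = i := by omega
  rw [star_coeff_lin_pow a b k i hik, e1, e2, neg_pow b]
  have hch : (k.choose i : ℂ) ≠ 0 := Nat.cast_ne_zero.2 (Nat.choose_pos hik).ne'
  have hsign : (-1 : ℂ) ^ i * (-1) ^ (k - i) = (-1) ^ k := by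
    rw [← pow_add, Nat.add_sub_cancel' hik]
  rw [div_eq_iff hch]
  linear_combination ((k.choose i : ℂ) * a ^ i * b ^ (k - i) * r.coeff (k - i)) * hsign

/-- star-based duality: with `p_I = ⊙_{j ∈ Iᶜ} Λ_{L_j^k}`,
`h_I = ∏_{i ∈ I} Lᵢ` and `g_I = h_I^{⊙ d} ∈ Sym^d(P_{1,k})`, the natural pairing
`p_I(g_{I'})` — given (up to the `d!` normalization) by `∏_{j ∈ Iᶜ} (L_j^k, h_{I'})` —
is nonzero if `I = I'` and zero if `I ≠ I'`, for all `k`-subsets `I, I'`. -/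
theorem star_maps_pairing (n k : ℕ) (hk : 1 ≤ k) (hkn : k ≤ n - 1)
    (u v : Fin n → ℂ) (hnz : ∀ i, ((u i, v i) : ℂ × ℂ) ≠ 0)
    (hdist : ∀ i j, i ≠ j → ¬ ∃ c : ℂ, ((u j, v j) : ℂ × ℂ) = c • (u i, v i))
    (I I' : Finset (Fin n))
    (hI : I ∈ Finset.powersetCard k (Finset.univ : Finset (Fin n)))
    (hI' : I' ∈ Finset.powersetCard k (Finset.univ : Finset (Fin n))) :
    (I = I' →
      (∏ j ∈ Iᶜ, bform k
        ((Polynomial.C (u j) * Polynomial.X - Polynomial.C (v j)) ^ k)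
        (∏ i ∈ I', (Polynomial.C (u i) * Polynomial.X - Polynomial.C (v i)))) ≠ 0) ∧
    (I ≠ I' →
      (∏ j ∈ Iᶜ, bform k
        ((Polynomial.C (u j) * Polynomial.X - Polynomial.C (v j)) ^ k)
        (∏ i ∈ I', (Polynomial.C (u i) * Polynomial.X - Polynomial.C (v i)))) = 0) := by
  have hcI : I.card = k := (Finset.mem_powersetCard.1 hI).2
  have hcI' : I'.card = k := (Finset.mem_powersetCard.1 hI').2
  have hbf : ∀ j : Fin n,
      bform k ((C (u j) * X - C (v j)) ^ k) (∏ i ∈ I', (C (u i) * X - C (v i)))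
        = (-1) ^ k * ∏ i ∈ I', (u i * v j - v i * u j) := by
    intro j
    rw [bform, star_bform_lin_pow, ← hcI', star_homog_eval]
  constructor
  · intro hII'
    subst hII'
    rw [Finset.prod_ne_zero_iff]
    intro j hj
    rw [hbf j]
    refine mul_ne_zero (pow_ne_zero _ (by norm_num)) ?_
    rw [Finset.prod_ne_zero_iff]
    intro i hi
    exact star_cross_ne u v hnz hdist i j (fun h => (Finset.mem_compl.1 hj) (h ▸ hi))
  · intro hne
    have : ∃ j ∈ I', j ∉ I := by
      by_contra h
      push_neg at h
      exact hne (Finset.eq_of_subset_of_card_le h (by rw [hcI, hcI'])).symm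
    obtain ⟨j, hjI', hjI⟩ := this
    refine Finset.prod_eq_zero (Finset.mem_compl.2 hjI) ?_
    rw [hbf j]
    rw [Finset.prod_eq_zero hjI' (by ring)]
    ring
end

section
/- If z_1, ..., z_n are distinct complex numbers (affine points of CP^1 with lifts (1, z_i)), then the matrix whose I-th column records the coefficients of p_I = Lambda_{q_I}^{\odot d} in the monomial basis of degree-d polynomials in z_0,...,z_k has nonzero determinant; equivalently, the generalized Lagrange interpolation problem of prescribing values of a degree-d polynomial in k+1 variables at the binom(n,d) points corresponding to d-subsets has a unique solution. -/
open Polynomial Finset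

lemma bform_X_pow (k i : ℕ) (hik : i ≤ k) (q : Polynomial ℂ) :
    bform k q (Polynomial.X ^ i) =
      (-1) ^ (k - i) * q.coeff (k - i) / (k.choose (k - i) : ℂ) := by
  unfold bform
  rw [Finset.sum_eq_single_of_mem (k - i) (by simp [Nat.lt_succ_iff, Nat.sub_le])]
  · rw [show k - (k - i) = i by omega, Polynomial.coeff_X_pow, if_pos rfl, mul_one]
  · intro j hj hne
    rw [Polynomial.coeff_X_pow, if_neg (by simp only [Finset.mem_range] at hj; omega),
      mul_zero, zero_div]

/-- The key pairing formula: evaluating `∑ i vv(w) i * bform k q (X^i)` gives `q(w)`. -/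
lemma pairing (k : ℕ) (q : Polynomial ℂ) (hq : q.natDegree < k + 1) (w : ℂ) :
    ∑ i : Fin (k + 1),
        ((-1 : ℂ) ^ (k - (i : ℕ)) * (k.choose (k - (i : ℕ)) : ℂ) * w ^ (k - (i : ℕ))) *
          bform k q (Polynomial.X ^ (i : ℕ)) = q.eval w := by
  have step : ∀ i : Fin (k + 1),
      ((-1 : ℂ) ^ (k - (i : ℕ)) * (k.choose (k - (i : ℕ)) : ℂ) * w ^ (k - (i : ℕ))) *
        bform k q (Polynomial.X ^ (i : ℕ)) = q.coeff (k - (i : ℕ)) * w ^ (k - (i : ℕ)) := by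
    intro i
    rw [bform_X_pow k i (by omega) q]
    have hC : ((k.choose (k - (i : ℕ)) : ℕ) : ℂ) ≠ 0 := by
      exact_mod_cast (Nat.choose_pos (Nat.sub_le k i)).ne'
    field_simp
    ring_nf
    rw [mul_comm (k - (i:ℕ)) 2, pow_mul, neg_one_sq, one_pow, mul_one]
  rw [Finset.sum_congr rfl fun i _ => step i]
  rw [Fin.sum_univ_eq_sum_range (fun m => q.coeff (k - m) * w ^ (k - m)) (k + 1)]
  have := Finset.sum_range_reflect (fun m => q.coeff m * w ^ m) (k + 1)
  simp only [Nat.add_sub_cancel] at this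
  rw [this, Polynomial.eval_eq_sum_range' hq]

noncomputable def DDl {N : ℕ} (v : Fin N → ℂ) :
    MvPolynomial (Fin N) ℂ →ₗ[ℂ] MvPolynomial (Fin N) ℂ :=
  ∑ i, v i • (MvPolynomial.pderiv i).toLinearMap

lemma DDl_apply {N : ℕ} (v : Fin N → ℂ) (p : MvPolynomial (Fin N) ℂ) :
    DDl v p = ∑ i, v i • MvPolynomial.pderiv i p := by
  simp [DDl]

lemma DDl_mul {N : ℕ} (v : Fin N → ℂ) (p q : MvPolynomial (Fin N) ℂ) :
    DDl v (p * q) = DDl v p * q + p * DDl v q := by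
  simp only [DDl_apply, MvPolynomial.pderiv_mul, smul_add, Finset.sum_add_distrib,
    Finset.sum_mul, Finset.mul_sum, smul_mul_assoc, mul_smul_comm]

lemma DDl_pow {N : ℕ} (v : Fin N → ℂ) (p : MvPolynomial (Fin N) ℂ) (m : ℕ) :
    DDl v (p ^ (m + 1)) = ((m + 1 : ℕ) : ℂ) • (p ^ m * DDl v p) := by
  induction m with
  | zero => simp
  | succ m ih =>
    rw [pow_succ, DDl_mul, ih, smul_mul_assoc, mul_right_comm (p ^ m) _ p, ← pow_succ]
    have h1 : ((m + 1 + 1 : ℕ) : ℂ) = ((m + 1 : ℕ) : ℂ) + 1 := by push_cast; ring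
    rw [h1, add_smul, one_smul]

lemma DDl_lin {N : ℕ} (v c : Fin N → ℂ) :
    DDl v (∑ i, MvPolynomial.C (c i) * MvPolynomial.X i) =
      MvPolynomial.C (∑ i, v i * c i) := by
  simp only [DDl_apply, map_sum, MvPolynomial.pderiv_C_mul, MvPolynomial.pderiv_X]
  refine Finset.sum_congr rfl fun j _ => ?_
  rw [Finset.sum_eq_single j (fun i _ hne => by simp [Pi.single_apply, (Ne.symm hne)])
    (by simp)]
  simp [MvPolynomial.smul_eq_C_mul]

noncomputable def Dfold {N : ℕ} : List (Fin N → ℂ) →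
    (MvPolynomial (Fin N) ℂ →ₗ[ℂ] MvPolynomial (Fin N) ℂ)
  | [] => LinearMap.id
  | v :: T => (Dfold T).comp (DDl v)

lemma Dfold_C_mul {N : ℕ} (L : List (Fin N → ℂ)) (a : ℂ) (p : MvPolynomial (Fin N) ℂ) :
    Dfold L (MvPolynomial.C a * p) = MvPolynomial.C a * Dfold L p := by
  induction L generalizing p with
  | nil => rfl
  | cons v T ih =>
    show Dfold T (DDl v (MvPolynomial.C a * p)) = _
    rw [MvPolynomial.C_mul', map_smul, ← MvPolynomial.C_mul', ih]
    rfl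

lemma Dfold_pow {N : ℕ} (c : Fin N → ℂ) (L : List (Fin N → ℂ)) :
    Dfold L ((∑ i, MvPolynomial.C (c i) * MvPolynomial.X i) ^ L.length) =
      MvPolynomial.C ((L.length.factorial : ℂ) *
        (L.map (fun v => ∑ i, v i * c i)).prod) := by
  induction L with
  | nil => simp [Dfold]
  | cons v T ih =>
    show Dfold T (DDl v ((∑ i, MvPolynomial.C (c i) * MvPolynomial.X i) ^ (v :: T).length)) = _
    rw [List.length_cons, DDl_pow, DDl_lin, map_smul, mul_comm, Dfold_C_mul, ih,
      ← MvPolynomial.C_mul, MvPolynomial.smul_eq_C_mul, ← MvPolynomial.C_mul,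
      MvPolynomial.C_inj]
    push_cast [Nat.factorial_succ, List.map_cons, List.prod_cons]
    ring

/-- generalized Lagrange interpolation: for distinct complex numbers
`z_1, …, z_n` (affine points of `ℂP¹` with lifts `(1, zᵢ)`, so `Lᵢ = v - zᵢ u` is the
polynomial `X - zᵢ`), the elements `p_I = Λ_{q_I}^{⊙ d}` (`q_I = ∏_{j ∈ Iᶜ} L_j`),
viewed in `P_{k,d}` via `Sym^d(P_{1,k}^*) = P_{k,d}` as the homogeneous polynomials
`(∑_i (q_I, X^i) · zᵢ)^d` in the variables `z_0, …, z_k`, are linearly independent;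
equivalently the matrix of their coefficients in the monomial basis has nonzero
determinant, i.e. the generalized Lagrange interpolation problem at the `binom(n,d)`
points corresponding to `d`-subsets has a unique solution. -/
theorem generalized_lagrange (n d : ℕ) (hd : 1 ≤ d) (hdn : d ≤ n - 1)
    (z : Fin n → ℂ) (hz : Function.Injective z) :
    LinearIndependent ℂ
      (fun I : Finset.powersetCard d (Finset.univ : Finset (Fin n)) =>
        (∑ i : Fin (n - d + 1),
            MvPolynomial.C
              (bform (n - d)
                (∏ j ∈ ((I : Finset (Fin n)))ᶜ, (Polynomial.X - Polynomial.C (z j)))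
                (Polynomial.X ^ (i : ℕ)))
              * MvPolynomial.X i) ^ d) := by

  classical
  rw [Fintype.linearIndependent_iff]
  intro g hg J
  have hJcard : (J : Finset (Fin n)).card = d := (Finset.mem_powersetCard.mp J.2).2
  set vv : ℂ → Fin (n - d + 1) → ℂ := fun w i =>
    (-1 : ℂ) ^ (n - d - (i : ℕ)) * ((n - d).choose (n - d - (i : ℕ)) : ℂ) *
      w ^ (n - d - (i : ℕ)) with hvv
  set L : List (Fin (n - d + 1) → ℂ) :=
    (J : Finset (Fin n)).toList.map (fun j => vv (z j)) with hLdef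
  have hL : L.length = d := by
    rw [hLdef, List.length_map, Finset.length_toList, hJcard]
  have key : ∀ I : Finset.powersetCard d (Finset.univ : Finset (Fin n)),
      Dfold L ((∑ i : Fin (n - d + 1),
          MvPolynomial.C
            (bform (n - d)
              (∏ j ∈ ((I : Finset (Fin n)))ᶜ, (Polynomial.X - Polynomial.C (z j)))
              (Polynomial.X ^ (i : ℕ)))
            * MvPolynomial.X i) ^ d) =
        MvPolynomial.C ((d.factorial : ℂ) *
          ∏ j ∈ (J : Finset (Fin n)), ∏ j' ∈ ((I : Finset (Fin n)))ᶜ, (z j - z j')) := by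
    intro I
    have hIcard : (I : Finset (Fin n)).card = d := (Finset.mem_powersetCard.mp I.2).2
    set q : Polynomial ℂ :=
      ∏ j ∈ ((I : Finset (Fin n)))ᶜ, (Polynomial.X - Polynomial.C (z j)) with hq
    have hdeg : q.natDegree < n - d + 1 := by
      have h1 : q.natDegree = ((I : Finset (Fin n)))ᶜ.card := by
        rw [hq, Polynomial.natDegree_prod _ _ (fun j _ => Polynomial.X_sub_C_ne_zero (z j))]
        simp
      rw [h1, Finset.card_compl, hIcard]
      simp [Fintype.card_fin]
    have h0 := Dfold_pow (fun i : Fin (n - d + 1) =>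
      bform (n - d) q (Polynomial.X ^ (i : ℕ))) L
    rw [hL] at h0
    rw [h0]
    congr 1
    rw [hLdef, List.map_map, Finset.prod_map_toList]
    congr 1
    refine Finset.prod_congr rfl fun j _ => ?_
    show ∑ i : Fin (n - d + 1), vv (z j) i * bform (n - d) q (Polynomial.X ^ (i : ℕ)) = _
    simp only [hvv]
    rw [pairing (n - d) q hdeg (z j), hq, Polynomial.eval_prod]
    refine Finset.prod_congr rfl fun j' _ => ?_
    simp
  have hg2 := congrArg (Dfold L) hg
  rw [map_sum, map_zero] at hg2
  simp only [map_smul] at hg2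
  simp only [key] at hg2
  simp only [MvPolynomial.smul_eq_C_mul, ← MvPolynomial.C_mul] at hg2
  have hg3 := congrArg MvPolynomial.constantCoeff hg2
  simp only [map_sum, MvPolynomial.constantCoeff_C, map_zero] at hg3
  rw [Fintype.sum_eq_single J] at hg3
  · have hPJ : (∏ j ∈ (J : Finset (Fin n)), ∏ j' ∈ ((J : Finset (Fin n)))ᶜ,
        (z j - z j')) ≠ 0 := by
      rw [Finset.prod_ne_zero_iff]
      intro j hj
      rw [Finset.prod_ne_zero_iff]
      intro j' hj'
      have : j ≠ j' := fun h => (Finset.mem_compl.mp hj') (h ▸ hj)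
      exact sub_ne_zero.mpr (fun h => this (hz h))
    have hfac : ((d.factorial : ℕ) : ℂ) ≠ 0 := by
      exact_mod_cast (Nat.factorial_pos d).ne'
    rcases mul_eq_zero.mp hg3 with h | h
    · exact h
    · exact absurd h (mul_ne_zero hfac hPJ)
  · intro I hIJ
    have hne : (I : Finset (Fin n)) ≠ (J : Finset (Fin n)) :=
      fun h => hIJ (Subtype.ext h)
    have : ¬ (J : Finset (Fin n)) ⊆ (I : Finset (Fin n)) := by
      intro hsub
      exact hne (Finset.eq_of_subset_of_card_le hsub
        (by rw [hJcard, (Finset.mem_powersetCard.mp I.2).2])).symm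
    obtain ⟨j, hjJ, hjI⟩ := Finset.not_subset.mp this
    have hzero : (∏ j ∈ (J : Finset (Fin n)), ∏ j' ∈ ((I : Finset (Fin n)))ᶜ,
        (z j - z j')) = 0 := by
      refine Finset.prod_eq_zero hjJ ?_
      refine Finset.prod_eq_zero (Finset.mem_compl.mpr hjI) ?_
      simp
    rw [hzero, mul_zero, mul_zero]
end
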